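/- Let k > 0, ν ≥ k/2, and x > 0. Then the Chebyshev-type integral inequality (∫_0^1 cosh(x t/√k)(1−t²)^{ν/k − 1/2} dt) · (∫_0^1 cosh(x t/√k)(1−t²)^{ν/k + 1/2} dt) ≤ ((√k/x) · sinh(x/√k)) · ∫_0^1 cosh(x t/√k)(1−t²)^{2ν/k} dt holds. Moreover, if instead −k/2 < ν < k/2, the inequality is reversed. -/

import Mathlib

open Real MeasureTheory Set

/-- Integrability of `w t * (1 - t^2)^b` on `Ioo 0 1` for continuous `w` and `b > -1`. -/
lemma cheb_aux_integrable (w : ℝ → ℝ) (hw : Continuous w) (b : ℝ) (hb : -1 < b) :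
    IntegrableOn (fun t => w t * (1 - t ^ 2) ^ b) (Ioo (0:ℝ) 1) := by
  have h1 : IntervalIntegrable (fun t : ℝ => t ^ b) volume 0 1 :=
    intervalIntegral.intervalIntegrable_rpow' hb
  have h2 : IntervalIntegrable (fun t : ℝ => (1 - t) ^ b) volume 0 1 := by
    simpa using (h1.comp_sub_left 1).symm
  have h3 : ContinuousOn (fun t : ℝ => (1 + t) ^ b) (Set.uIcc (0:ℝ) 1) := by
    apply ContinuousOn.rpow_const ((continuous_const.add continuous_id).continuousOn)
    intro t ht
    rw [Set.uIcc_of_le (by norm_num : (0:ℝ) ≤ 1)] at ht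
    left
    have : (0:ℝ) ≤ t := ht.1
    show (1:ℝ) + t ≠ 0
    positivity
  have h4 : IntervalIntegrable (fun t : ℝ => (1 - t) ^ b * (1 + t) ^ b) volume 0 1 :=
    h2.mul_continuousOn h3
  have h5 : IntervalIntegrable (fun t : ℝ => w t * ((1 - t) ^ b * (1 + t) ^ b)) volume 0 1 :=
    h4.continuousOn_mul hw.continuousOn
  have h6 : IntegrableOn (fun t : ℝ => w t * ((1 - t) ^ b * (1 + t) ^ b)) (Ioo (0:ℝ) 1) :=
    ((intervalIntegrable_iff_integrableOn_Ioc_of_le zero_le_one).mp h5).mono_set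
      Ioo_subset_Ioc_self
  apply h6.congr_fun _ measurableSet_Ioo
  intro t ht
  have h0 : (0:ℝ) ≤ 1 - t := by linarith [ht.2]
  have h0' : (0:ℝ) ≤ 1 + t := by linarith [ht.1]
  show w t * ((1 - t) ^ b * (1 + t) ^ b) = w t * (1 - t ^ 2) ^ b
  rw [← Real.mul_rpow h0 h0']
  congr 2
  ring

/-- Chebyshev core identity: the symmetrized double integral equals twice the covariance. -/
lemma cheb_core (w f g : ℝ → ℝ)
    (hW : IntegrableOn w (Ioo (0:ℝ) 1))
    (hF : IntegrableOn (fun t => w t * f t) (Ioo (0:ℝ) 1))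
    (hG : IntegrableOn (fun t => w t * g t) (Ioo (0:ℝ) 1))
    (hP : IntegrableOn (fun t => w t * (f t * g t)) (Ioo (0:ℝ) 1)) :
    (∫ z : ℝ × ℝ, w z.1 * w z.2 * ((f z.1 - f z.2) * (g z.1 - g z.2))
        ∂((volume.restrict (Ioo (0:ℝ) 1)).prod (volume.restrict (Ioo (0:ℝ) 1))))
      = 2 * ((∫ t in Ioo (0:ℝ) 1, w t) * (∫ t in Ioo (0:ℝ) 1, w t * (f t * g t))
          - (∫ t in Ioo (0:ℝ) 1, w t * f t) * (∫ t in Ioo (0:ℝ) 1, w t * g t)) := by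
  set μ := volume.restrict (Ioo (0:ℝ) 1) with hμ
  have e1 : Integrable (fun z : ℝ × ℝ => (w z.1 * (f z.1 * g z.1)) * w z.2) (μ.prod μ) :=
    hP.mul_prod hW
  have e2 : Integrable (fun z : ℝ × ℝ => (w z.1 * f z.1) * (w z.2 * g z.2)) (μ.prod μ) :=
    hF.mul_prod hG
  have e3 : Integrable (fun z : ℝ × ℝ => (w z.1 * g z.1) * (w z.2 * f z.2)) (μ.prod μ) :=
    hG.mul_prod hF
  have e4 : Integrable (fun z : ℝ × ℝ => w z.1 * (w z.2 * (f z.2 * g z.2))) (μ.prod μ) :=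
    hW.mul_prod hP
  have key : (fun z : ℝ × ℝ => w z.1 * w z.2 * ((f z.1 - f z.2) * (g z.1 - g z.2)))
      = fun z : ℝ × ℝ => (w z.1 * (f z.1 * g z.1)) * w z.2 - (w z.1 * f z.1) * (w z.2 * g z.2)
          - (w z.1 * g z.1) * (w z.2 * f z.2) + w z.1 * (w z.2 * (f z.2 * g z.2)) := by
    funext z; ring
  rw [key]
  have i1 : (∫ z : ℝ × ℝ, (w z.1 * (f z.1 * g z.1)) * w z.2 ∂(μ.prod μ))
      = (∫ t, w t * (f t * g t) ∂μ) * ∫ t, w t ∂μ :=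
    integral_prod_mul (fun t => w t * (f t * g t)) w
  have i2 : (∫ z : ℝ × ℝ, (w z.1 * f z.1) * (w z.2 * g z.2) ∂(μ.prod μ))
      = (∫ t, w t * f t ∂μ) * ∫ t, w t * g t ∂μ :=
    integral_prod_mul (fun t => w t * f t) (fun t => w t * g t)
  have i3 : (∫ z : ℝ × ℝ, (w z.1 * g z.1) * (w z.2 * f z.2) ∂(μ.prod μ))
      = (∫ t, w t * g t ∂μ) * ∫ t, w t * f t ∂μ :=
    integral_prod_mul (fun t => w t * g t) (fun t => w t * f t)
  have i4 : (∫ z : ℝ × ℝ, w z.1 * (w z.2 * (f z.2 * g z.2)) ∂(μ.prod μ))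
      = (∫ t, w t ∂μ) * ∫ t, w t * (f t * g t) ∂μ :=
    integral_prod_mul w (fun t => w t * (f t * g t))
  have e12 : Integrable (fun z : ℝ × ℝ => (w z.1 * (f z.1 * g z.1)) * w z.2
      - (w z.1 * f z.1) * (w z.2 * g z.2)) (μ.prod μ) := e1.sub e2
  have e123 : Integrable (fun z : ℝ × ℝ => (w z.1 * (f z.1 * g z.1)) * w z.2
      - (w z.1 * f z.1) * (w z.2 * g z.2) - (w z.1 * g z.1) * (w z.2 * f z.2)) (μ.prod μ) :=
    e12.sub e3
  rw [integral_add e123 e4, integral_sub e12 e3, integral_sub e1 e2, i1, i2, i3, i4]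
  ring

/-- The main identity: covariance equals half the symmetrized double integral. -/
lemma cheb_main (k ν x : ℝ) (hk : 0 < k) (hx : 0 < x) (hν : -(k / 2) < ν) :
    (Real.sqrt k / x * Real.sinh (x / Real.sqrt k)) *
        (∫ t in (0:ℝ)..1, Real.cosh (x * t / Real.sqrt k) * (1 - t ^ 2) ^ (2 * ν / k)) -
      (∫ t in (0:ℝ)..1, Real.cosh (x * t / Real.sqrt k) * (1 - t ^ 2) ^ (ν / k - 1 / 2)) *
        (∫ t in (0:ℝ)..1, Real.cosh (x * t / Real.sqrt k) * (1 - t ^ 2) ^ (ν / k + 1 / 2))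
    = (1 / 2) * ∫ z : ℝ × ℝ,
        Real.cosh (x * z.1 / Real.sqrt k) * Real.cosh (x * z.2 / Real.sqrt k) *
          (((1 - z.1 ^ 2) ^ (ν / k - 1 / 2) - (1 - z.2 ^ 2) ^ (ν / k - 1 / 2)) *
           ((1 - z.1 ^ 2) ^ (ν / k + 1 / 2) - (1 - z.2 ^ 2) ^ (ν / k + 1 / 2)))
        ∂((volume.restrict (Ioo (0:ℝ) 1)).prod (volume.restrict (Ioo (0:ℝ) 1))) := by
  have hk' : 0 < Real.sqrt k := Real.sqrt_pos.2 hk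
  set w : ℝ → ℝ := fun t => Real.cosh (x * t / Real.sqrt k) with hwdef
  have hw : Continuous w := Real.continuous_cosh.comp
    ((continuous_const.mul continuous_id).div_const _)
  have ha : (-1 : ℝ) < ν / k - 1 / 2 := by
    have h2 : -(1 / 2 : ℝ) < ν / k := by
      rw [lt_div_iff₀ hk]; linarith
    linarith
  have ha2 : (-1 : ℝ) < 2 * ν / k := by
    have e : 2 * ν / k = 2 * (ν / k) := by ring
    rw [e]; nlinarith
  -- integrability facts
  have hW : IntegrableOn w (Ioo (0:ℝ) 1) := by
    have h := (hw.intervalIntegrable (0:ℝ) 1 : IntervalIntegrable w volume 0 1)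
    exact ((intervalIntegrable_iff_integrableOn_Ioc_of_le zero_le_one).mp h).mono_set
      Ioo_subset_Ioc_self
  have hF : IntegrableOn (fun t => w t * (1 - t ^ 2) ^ (ν / k - 1 / 2)) (Ioo (0:ℝ) 1) :=
    cheb_aux_integrable w hw _ ha
  have hG : IntegrableOn (fun t => w t * (1 - t ^ 2) ^ (ν / k + 1 / 2)) (Ioo (0:ℝ) 1) :=
    cheb_aux_integrable w hw _ (by linarith)
  have hP' : IntegrableOn (fun t => w t * (1 - t ^ 2) ^ (2 * ν / k)) (Ioo (0:ℝ) 1) :=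
    cheb_aux_integrable w hw _ ha2
  have hprodeq : EqOn (fun t : ℝ => w t * (1 - t ^ 2) ^ (2 * ν / k))
      (fun t : ℝ => w t * ((1 - t ^ 2) ^ (ν / k - 1 / 2) * (1 - t ^ 2) ^ (ν / k + 1 / 2)))
      (Ioo (0:ℝ) 1) := by
    intro t ht
    have h1 : (0:ℝ) < 1 - t ^ 2 := by nlinarith [ht.1, ht.2]
    simp only
    have hexp : 2 * ν / k = (ν / k - 1 / 2) + (ν / k + 1 / 2) := by ring
    rw [hexp, Real.rpow_add h1]
  have hP : IntegrableOn
      (fun t => w t * ((1 - t ^ 2) ^ (ν / k - 1 / 2) * (1 - t ^ 2) ^ (ν / k + 1 / 2)))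
      (Ioo (0:ℝ) 1) := hP'.congr_fun hprodeq measurableSet_Ioo
  -- conversion of interval integrals to set integrals over Ioo
  have conv : ∀ e : ℝ, (∫ t in (0:ℝ)..1, w t * (1 - t ^ 2) ^ e)
      = ∫ t in Ioo (0:ℝ) 1, w t * (1 - t ^ 2) ^ e := by
    intro e
    rw [intervalIntegral.integral_of_le zero_le_one, integral_Ioc_eq_integral_Ioo]
  -- value of ∫ w
  have hWval : (∫ t in Ioo (0:ℝ) 1, w t) = Real.sqrt k / x * Real.sinh (x / Real.sqrt k) := by
    rw [← integral_Ioc_eq_integral_Ioo, ← intervalIntegral.integral_of_le zero_le_one]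
    have hderiv : ∀ t ∈ Set.uIcc (0:ℝ) 1,
        HasDerivAt (fun y => Real.sqrt k / x * Real.sinh (x * y / Real.sqrt k)) (w t) t := by
      intro t _
      have h1 : HasDerivAt (fun y : ℝ => x * y / Real.sqrt k) (x / Real.sqrt k) t := by
        simpa using ((hasDerivAt_id t).const_mul x).div_const (Real.sqrt k)
      have h2 := (h1.sinh).const_mul (Real.sqrt k / x)
      refine h2.congr_deriv ?_
      rw [hwdef]
      field_simp
    rw [intervalIntegral.integral_eq_sub_of_hasDerivAt hderiv
      (hw.intervalIntegrable 0 1 : IntervalIntegrable w volume 0 1)]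
    norm_num
  -- put the pieces together
  have core := cheb_core w (fun t => (1 - t ^ 2) ^ (ν / k - 1 / 2))
    (fun t => (1 - t ^ 2) ^ (ν / k + 1 / 2)) hW hF hG hP
  have hPconv : (∫ t in Ioo (0:ℝ) 1, w t * (1 - t ^ 2) ^ (2 * ν / k))
      = ∫ t in Ioo (0:ℝ) 1,
          w t * ((1 - t ^ 2) ^ (ν / k - 1 / 2) * (1 - t ^ 2) ^ (ν / k + 1 / 2)) :=
    setIntegral_congr_fun measurableSet_Ioo hprodeq
  simp only [hwdef] at conv hPconv hWval core
  rw [conv, conv, conv, hPconv, ← hWval, core]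
  ring

lemma cheb_pair_nonneg {u v a : ℝ} (hu : 0 < u) (hv : 0 < v) (ha : 0 ≤ a) :
    0 ≤ (u ^ a - v ^ a) * (u ^ (a + 1) - v ^ (a + 1)) := by
  rcases le_total u v with h | h
  · have h1 : u ^ a ≤ v ^ a := Real.rpow_le_rpow hu.le h ha
    have h2 : u ^ (a + 1) ≤ v ^ (a + 1) := Real.rpow_le_rpow hu.le h (by linarith)
    nlinarith [mul_nonneg (sub_nonneg.2 h1) (sub_nonneg.2 h2)]
  · have h1 : v ^ a ≤ u ^ a := Real.rpow_le_rpow hv.le h ha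
    have h2 : v ^ (a + 1) ≤ u ^ (a + 1) := Real.rpow_le_rpow hv.le h (by linarith)
    exact mul_nonneg (by linarith) (by linarith)

lemma cheb_pair_nonpos {u v a : ℝ} (hu : 0 < u) (hv : 0 < v) (ha : a ≤ 0) (ha' : 0 ≤ a + 1) :
    (u ^ a - v ^ a) * (u ^ (a + 1) - v ^ (a + 1)) ≤ 0 := by
  rcases le_total u v with h | h
  · have h1 : v ^ a ≤ u ^ a := Real.rpow_le_rpow_of_nonpos hu h ha
    have h2 : u ^ (a + 1) ≤ v ^ (a + 1) := Real.rpow_le_rpow hu.le h ha'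
    nlinarith [mul_nonneg (sub_nonneg.2 h2) (sub_nonneg.2 h1)]
  · have h1 : u ^ a ≤ v ^ a := Real.rpow_le_rpow_of_nonpos hv h ha
    have h2 : v ^ (a + 1) ≤ u ^ (a + 1) := Real.rpow_le_rpow hv.le h ha'
    nlinarith [mul_nonneg (sub_nonneg.2 h1) (sub_nonneg.2 h2)]

theorem chebyshev_type_integral_inequality (k ν x : ℝ) (hk : 0 < k) (hx : 0 < x) :
    (k / 2 ≤ ν →
      (∫ t in (0:ℝ)..1, Real.cosh (x * t / Real.sqrt k) * (1 - t ^ 2) ^ (ν / k - 1 / 2)) *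
          (∫ t in (0:ℝ)..1, Real.cosh (x * t / Real.sqrt k) * (1 - t ^ 2) ^ (ν / k + 1 / 2)) ≤
        (Real.sqrt k / x * Real.sinh (x / Real.sqrt k)) *
          ∫ t in (0:ℝ)..1, Real.cosh (x * t / Real.sqrt k) * (1 - t ^ 2) ^ (2 * ν / k)) ∧
    (-(k / 2) < ν → ν < k / 2 →
      (Real.sqrt k / x * Real.sinh (x / Real.sqrt k)) *
          (∫ t in (0:ℝ)..1, Real.cosh (x * t / Real.sqrt k) * (1 - t ^ 2) ^ (2 * ν / k)) ≤
        (∫ t in (0:ℝ)..1, Real.cosh (x * t / Real.sqrt k) * (1 - t ^ 2) ^ (ν / k - 1 / 2)) *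
          ∫ t in (0:ℝ)..1, Real.cosh (x * t / Real.sqrt k) * (1 - t ^ 2) ^ (ν / k + 1 / 2)) := by
  constructor
  · intro hν
    have hν' : -(k / 2) < ν := by linarith
    have main := cheb_main k ν x hk hx hν'
    have hsign : 0 ≤ ∫ z : ℝ × ℝ,
        Real.cosh (x * z.1 / Real.sqrt k) * Real.cosh (x * z.2 / Real.sqrt k) *
          (((1 - z.1 ^ 2) ^ (ν / k - 1 / 2) - (1 - z.2 ^ 2) ^ (ν / k - 1 / 2)) *
           ((1 - z.1 ^ 2) ^ (ν / k + 1 / 2) - (1 - z.2 ^ 2) ^ (ν / k + 1 / 2)))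
        ∂((volume.restrict (Ioo (0:ℝ) 1)).prod (volume.restrict (Ioo (0:ℝ) 1))) := by
      rw [Measure.prod_restrict]
      apply setIntegral_nonneg (measurableSet_Ioo.prod measurableSet_Ioo)
      rintro ⟨s, t⟩ ⟨hs, ht⟩
      have hu : (0:ℝ) < 1 - s ^ 2 := by nlinarith [hs.1, hs.2]
      have hv : (0:ℝ) < 1 - t ^ 2 := by nlinarith [ht.1, ht.2]
      have ha : (0:ℝ) ≤ ν / k - 1 / 2 := by
        have : (1:ℝ) / 2 ≤ ν / k := by rw [le_div_iff₀ hk]; linarith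
        linarith
      have hpair := cheb_pair_nonneg hu hv ha
      have hexp : ν / k - 1 / 2 + 1 = ν / k + 1 / 2 := by ring
      rw [hexp] at hpair
      exact mul_nonneg (mul_nonneg (Real.cosh_pos _).le (Real.cosh_pos _).le) hpair
    nlinarith [main, hsign]
  · intro hν1 hν2
    have main := cheb_main k ν x hk hx hν1
    have hsign : (∫ z : ℝ × ℝ,
        Real.cosh (x * z.1 / Real.sqrt k) * Real.cosh (x * z.2 / Real.sqrt k) *
          (((1 - z.1 ^ 2) ^ (ν / k - 1 / 2) - (1 - z.2 ^ 2) ^ (ν / k - 1 / 2)) *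
           ((1 - z.1 ^ 2) ^ (ν / k + 1 / 2) - (1 - z.2 ^ 2) ^ (ν / k + 1 / 2)))
        ∂((volume.restrict (Ioo (0:ℝ) 1)).prod (volume.restrict (Ioo (0:ℝ) 1)))) ≤ 0 := by
      rw [Measure.prod_restrict]
      apply setIntegral_nonpos_of_ae_restrict
      refine (ae_restrict_iff' (measurableSet_Ioo.prod measurableSet_Ioo)).mpr
        (Filter.Eventually.of_forall ?_)
      rintro ⟨s, t⟩ ⟨hs, ht⟩
      have hu : (0:ℝ) < 1 - s ^ 2 := by nlinarith [hs.1, hs.2]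
      have hv : (0:ℝ) < 1 - t ^ 2 := by nlinarith [ht.1, ht.2]
      have ha : ν / k - 1 / 2 ≤ 0 := by
        have : ν / k ≤ 1 / 2 := by rw [div_le_iff₀ hk]; linarith
        linarith
      have ha' : (0:ℝ) ≤ ν / k - 1 / 2 + 1 := by
        have : -(1:ℝ) / 2 < ν / k := by rw [lt_div_iff₀ hk]; linarith
        linarith
      have hpair := cheb_pair_nonpos hu hv ha ha'
      have hexp : ν / k - 1 / 2 + 1 = ν / k + 1 / 2 := by ring
      rw [hexp] at hpair
      have hcc : (0:ℝ) ≤ Real.cosh (x * s / Real.sqrt k) * Real.cosh (x * t / Real.sqrt k) :=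
        mul_nonneg (Real.cosh_pos _).le (Real.cosh_pos _).le
      first
      | exact mul_nonpos_iff.mpr (Or.inl ⟨hcc, hpair⟩)
      | exact mul_nonpos_iff.mpr (Or.inr ⟨hcc, hpair⟩)
    nlinarith [main, hsign]
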